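/- Twisted periodicity of Q_∞ (from Lemma 4.1 of the paper). Let ν ∈ ℂ with Re ν > 0, and let ψ : (0,∞) → V be continuous and satisfy η(T)ψ(x) = ψ(x+1) + (x+1)^{-2ν-1} η(ST⁻¹) ψ(x/(x+1)) for all x > 0. Then for every x > 0 the series Q_∞(x) := ψ(x) - Σ_{n=1}^{∞} (n+x)^{-2ν-1} η(T'T^{n-1})^{-1} ψ(1 - 1/(n+x)) converges absolutely, and Q_∞(x+1) = η(T) Q_∞(x) for all x > 0. -/

import Mathlib

open Complex Filter Topology MeasureTheory Set

noncomputable section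

abbrev SL2Z := Matrix.SpecialLinearGroup (Fin 2) ℤ

def Smat : SL2Z := ⟨!![0, 1; -1, 0], by decide⟩
def Tmat : SL2Z := ⟨!![1, 1; 0, 1], by decide⟩
def Tpmat : SL2Z := ⟨!![1, 0; 1, 1], by decide⟩
def negI : SL2Z := ⟨!![-1, 0; 0, -1], by decide⟩

variable {V : Type} [NormedAddCommGroup V] [NormedSpace ℂ V]

/-- The term of index `n+1` of the series defining `Q_∞`:
`(n+1+x)^{-2ν-1} η(T'Tⁿ)⁻¹ ψ(1 - 1/(n+1+x))` (i.e. the series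
`Σ_{m≥1} (m+x)^{-2ν-1} η(T'T^{m-1})⁻¹ ψ(1 - 1/(m+x))` reindexed by `m = n+1`). -/
def QInftyTerm (ν : ℂ) (η : SL2Z →* (V →ₗ[ℂ] V)ˣ) (ψ : ℝ → V) (x : ℝ) (n : ℕ) : V :=
  ((((n : ℝ) + 1 + x : ℝ) : ℂ) ^ (-2 * ν - 1)) •
    (η (Tpmat * Tmat ^ n)⁻¹ : V →ₗ[ℂ] V) (ψ (1 - 1 / ((n : ℝ) + 1 + x)))

/-- `Q_∞(x) = ψ(x) - Σ_{n≥1} (n+x)^{-2ν-1} η(T'T^{n-1})⁻¹ ψ(1 - 1/(n+x))`. -/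
def QInfty [FiniteDimensional ℂ V] (ν : ℂ) (η : SL2Z →* (V →ₗ[ℂ] V)ˣ) (ψ : ℝ → V)
    (x : ℝ) : V :=
  ψ x - ∑' n : ℕ, QInftyTerm ν η ψ x n


section Aux

variable {V : Type} [NormedAddCommGroup V] [NormedSpace ℂ V]

lemma eta_mul_apply (η : SL2Z →* (V →ₗ[ℂ] V)ˣ) (a b : SL2Z) (v : V) :
    (η a : V →ₗ[ℂ] V) ((η b : V →ₗ[ℂ] V) v) = (η (a * b) : V →ₗ[ℂ] V) v := by
  rw [map_mul, Units.val_mul]; rfl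

lemma mat_shift (n : ℕ) : Tmat * (Tpmat * Tmat ^ (n + 1))⁻¹ = (Tpmat * Tmat ^ n)⁻¹ := by
  rw [pow_succ]; group

def Tinv : SL2Z := ⟨!![1, -1; 0, 1], by decide⟩
def Tpinv : SL2Z := ⟨!![1, 0; -1, 1], by decide⟩

lemma Tmat_inv : Tmat⁻¹ = Tinv :=
  inv_eq_of_mul_eq_one_right (by ext i j; fin_cases i <;> fin_cases j <;> decide)

lemma Tpmat_inv : Tpmat⁻¹ = Tpinv :=
  inv_eq_of_mul_eq_one_right (by ext i j; fin_cases i <;> fin_cases j <;> decide)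

lemma mat_zero : Tmat * (Tpmat * Tmat ^ 0)⁻¹ = Smat * Tmat⁻¹ := by
  rw [pow_zero, mul_one, Tmat_inv, Tpmat_inv]
  ext i j; fin_cases i <;> fin_cases j <;> decide

lemma eta_bound [FiniteDimensional ℂ V] (η : SL2Z →* (V →ₗ[ℂ] V)ˣ)
    (hηfin : (Set.range η).Finite) :
    ∃ C : ℝ, 0 ≤ C ∧ ∀ (g : SL2Z) (v : V), ‖(η g : V →ₗ[ℂ] V) v‖ ≤ C * ‖v‖ := by
  have hfin : ((fun u : (V →ₗ[ℂ] V)ˣ =>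
      ‖LinearMap.toContinuousLinearMap (u : V →ₗ[ℂ] V)‖) '' Set.range η).Finite :=
    hηfin.image _
  obtain ⟨C, hC⟩ := hfin.bddAbove
  refine ⟨max C 0, le_max_right _ _, fun g v => ?_⟩
  have h1 : ‖LinearMap.toContinuousLinearMap ((η g : V →ₗ[ℂ] V))‖ ≤ C :=
    hC ⟨η g, Set.mem_range_self g, rfl⟩
  calc ‖(η g : V →ₗ[ℂ] V) v‖
      = ‖LinearMap.toContinuousLinearMap ((η g : V →ₗ[ℂ] V)) v‖ := rfl
    _ ≤ ‖LinearMap.toContinuousLinearMap ((η g : V →ₗ[ℂ] V))‖ * ‖v‖ :=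
        ContinuousLinearMap.le_opNorm _ _
    _ ≤ max C 0 * ‖v‖ := by
        have := le_max_left C 0
        exact mul_le_mul_of_nonneg_right (h1.trans this) (norm_nonneg v)

lemma summable_norm_QInftyTerm [FiniteDimensional ℂ V] (η : SL2Z →* (V →ₗ[ℂ] V)ˣ)
    (hηfin : (Set.range η).Finite) (ν : ℂ) (hν : 0 < ν.re)
    (ψ : ℝ → V) (hψc : ContinuousOn ψ (Set.Ioi 0)) {x : ℝ} (hx : 0 < x) :
    Summable fun n : ℕ => ‖QInftyTerm ν η ψ x n‖ := by
  obtain ⟨C, hC0, hC⟩ := eta_bound η hηfin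
  have hxK : (0 : ℝ) < x / (1 + x) := by positivity
  have hKsub : Set.Icc (x / (1 + x)) 1 ⊆ Set.Ioi 0 := fun y hy => lt_of_lt_of_le hxK hy.1
  obtain ⟨M, hM⟩ := (isCompact_Icc (a := x / (1 + x)) (b := 1)).exists_bound_of_continuousOn
    (hψc.mono hKsub)
  have hM0 : 0 ≤ M := le_trans (norm_nonneg _) (hM (x / (1 + x))
    ⟨le_refl _, by rw [div_le_one (by linarith)]; linarith⟩)
  set p : ℝ := -2 * ν.re - 1 with hp
  have hplt : p < -1 := by simp only [hp]; linarith
  have hpneg : p ≤ 0 := by linarith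
  -- membership of the arguments in the compact set
  have harg : ∀ n : ℕ, (1 - 1 / ((n : ℝ) + 1 + x)) ∈ Set.Icc (x / (1 + x)) 1 := by
    intro n
    have hpos : (0 : ℝ) < (n : ℝ) + 1 + x := by positivity
    constructor
    · rw [div_le_iff₀ (by linarith)]
      have h1 : 1 / ((n : ℝ) + 1 + x) ≤ 1 / (1 + x) := by
        apply one_div_le_one_div_of_le (by linarith)
        have : (0:ℝ) ≤ (n:ℝ) := Nat.cast_nonneg n
        linarith
      have h2 : (1 - 1 / ((n : ℝ) + 1 + x)) * (1 + x) ≥ (1 - 1 / (1 + x)) * (1 + x) := by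
        apply mul_le_mul_of_nonneg_right (by linarith) (by linarith)
      have h3 : (1 - 1 / (1 + x)) * (1 + x) = x := by field_simp; ring
      linarith
    · have : 0 < 1 / ((n : ℝ) + 1 + x) := by positivity
      linarith
  -- norm of each term
  have hterm : ∀ n : ℕ, ‖QInftyTerm ν η ψ x n‖ ≤ C * M * ((n : ℝ) + 1) ^ p := by
    intro n
    have hpos : (0 : ℝ) < (n : ℝ) + 1 + x := by positivity
    have hcoeff : ‖((((n : ℝ) + 1 + x : ℝ) : ℂ) ^ (-2 * ν - 1))‖
        = ((n : ℝ) + 1 + x) ^ p := by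
      rw [Complex.norm_cpow_eq_rpow_re_of_pos hpos]
      congr 1
      simp [hp]
    have h1 : ‖QInftyTerm ν η ψ x n‖
        = ((n : ℝ) + 1 + x) ^ p *
          ‖(η (Tpmat * Tmat ^ n)⁻¹ : V →ₗ[ℂ] V) (ψ (1 - 1 / ((n : ℝ) + 1 + x)))‖ := by
      rw [QInftyTerm, norm_smul, hcoeff]
    rw [h1]
    have h2 : ‖(η (Tpmat * Tmat ^ n)⁻¹ : V →ₗ[ℂ] V) (ψ (1 - 1 / ((n : ℝ) + 1 + x)))‖
        ≤ C * M := by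
      calc _ ≤ C * ‖ψ (1 - 1 / ((n : ℝ) + 1 + x))‖ := hC _ _
        _ ≤ C * M := mul_le_mul_of_nonneg_left (hM _ (harg n)) hC0
    calc ((n : ℝ) + 1 + x) ^ p *
          ‖(η (Tpmat * Tmat ^ n)⁻¹ : V →ₗ[ℂ] V) (ψ (1 - 1 / ((n : ℝ) + 1 + x)))‖
        ≤ ((n : ℝ) + 1 + x) ^ p * (C * M) := by
          apply mul_le_mul_of_nonneg_left h2 (Real.rpow_nonneg (by linarith) _)
      _ ≤ ((n : ℝ) + 1) ^ p * (C * M) := by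
          apply mul_le_mul_of_nonneg_right _ (by positivity)
          exact Real.rpow_le_rpow_of_nonpos (by positivity) (by linarith) hpneg
      _ = C * M * ((n : ℝ) + 1) ^ p := by ring
  -- summability of the comparison series
  have hs0 : Summable fun n : ℕ => ((n : ℝ)) ^ p := Real.summable_nat_rpow.mpr hplt
  have hs1 : Summable fun n : ℕ => ((n : ℝ) + 1) ^ p := by
    have h := hs0.comp_injective Nat.succ_injective
    refine h.congr fun n => ?_
    have hc : ((n.succ : ℕ) : ℝ) = (n : ℝ) + 1 := by push_cast; ring
    simp only [Function.comp_apply, hc]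
  have hs2 : Summable fun n : ℕ => C * M * ((n : ℝ) + 1) ^ p := hs1.mul_left _
  exact Summable.of_nonneg_of_le (fun n => norm_nonneg _) hterm hs2

lemma QInftyTerm_shift [FiniteDimensional ℂ V] (η : SL2Z →* (V →ₗ[ℂ] V)ˣ) (ν : ℂ)
    (ψ : ℝ → V) (x : ℝ) (n : ℕ) :
    (η Tmat : V →ₗ[ℂ] V) (QInftyTerm ν η ψ x (n + 1)) = QInftyTerm ν η ψ (x + 1) n := by
  rw [QInftyTerm, QInftyTerm, LinearMap.map_smul, eta_mul_apply, mat_shift]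
  have h : ((n + 1 : ℕ) : ℝ) + 1 + x = (n : ℝ) + 1 + (x + 1) := by push_cast; ring
  rw [h]

lemma QInftyTerm_zero [FiniteDimensional ℂ V] (η : SL2Z →* (V →ₗ[ℂ] V)ˣ) (ν : ℂ)
    (ψ : ℝ → V) {x : ℝ} (hx : 0 < x) :
    (η Tmat : V →ₗ[ℂ] V) (QInftyTerm ν η ψ x 0) =
      (((x + 1 : ℝ) : ℂ) ^ (-2 * ν - 1)) •
        (η (Smat * Tmat⁻¹) : V →ₗ[ℂ] V) (ψ (x / (x + 1))) := by
  rw [QInftyTerm, LinearMap.map_smul, eta_mul_apply, mat_zero]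
  have h1 : ((0 : ℕ) : ℝ) + 1 + x = x + 1 := by push_cast; ring
  have h2 : 1 - 1 / (x + 1) = x / (x + 1) := by
    field_simp
    ring
  rw [h1, h2]

end Aux

/-- **Twisted periodicity of `Q_∞`** (from Lemma 4.1 of the paper): for `Re ν > 0` and
`ψ : (0,∞) → V` continuous satisfying the real Lewis equation, the series defining
`Q_∞(x)` converges absolutely for every `x > 0` and `Q_∞(x+1) = η(T) Q_∞(x)`. -/
theorem QInfty_twisted_periodicity [FiniteDimensional ℂ V] [Nontrivial V]
    (η : SL2Z →* (V →ₗ[ℂ] V)ˣ) (hη1 : η negI = 1) (hηfin : (Set.range η).Finite)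
    (ν : ℂ) (hν : 0 < ν.re)
    (ψ : ℝ → V) (hψc : ContinuousOn ψ (Set.Ioi 0))
    (hlewis : ∀ x : ℝ, 0 < x →
      (η Tmat : V →ₗ[ℂ] V) (ψ x) =
        ψ (x + 1) + (((x + 1 : ℝ) : ℂ) ^ (-2 * ν - 1)) •
          (η (Smat * Tmat⁻¹) : V →ₗ[ℂ] V) (ψ (x / (x + 1)))) :
    (∀ x : ℝ, 0 < x → Summable fun n : ℕ => ‖QInftyTerm ν η ψ x n‖) ∧
    (∀ x : ℝ, 0 < x →
      QInfty ν η ψ (x + 1) = (η Tmat : V →ₗ[ℂ] V) (QInfty ν η ψ x)) := by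
  have hsum : ∀ x : ℝ, 0 < x → Summable fun n : ℕ => ‖QInftyTerm ν η ψ x n‖ :=
    fun x hx => summable_norm_QInftyTerm η hηfin ν hν ψ hψc hx
  refine ⟨hsum, fun x hx => ?_⟩
  have hx1 : (0 : ℝ) < x + 1 := by linarith
  have hsx : Summable fun n : ℕ => QInftyTerm ν η ψ x n := (hsum x hx).of_norm
  set A : V →L[ℂ] V := LinearMap.toContinuousLinearMap (η Tmat : V →ₗ[ℂ] V) with hA
  have hAapp : ∀ v : V, A v = (η Tmat : V →ₗ[ℂ] V) v := fun v => rfl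
  have hmap : Summable fun n : ℕ => A (QInftyTerm ν η ψ x n) := by
    exact hsx.map (A : V →ₗ[ℂ] V).toAddMonoidHom A.continuous
  have htsumA : A (∑' n : ℕ, QInftyTerm ν η ψ x n)
      = ∑' n : ℕ, A (QInftyTerm ν η ψ x n) := A.map_tsum hsx
  have hsplit : (∑' n : ℕ, A (QInftyTerm ν η ψ x n))
      = A (QInftyTerm ν η ψ x 0) + ∑' n : ℕ, A (QInftyTerm ν η ψ x (n + 1)) :=
    Summable.tsum_eq_zero_add hmap
  have hshift : (∑' n : ℕ, A (QInftyTerm ν η ψ x (n + 1)))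
      = ∑' n : ℕ, QInftyTerm ν η ψ (x + 1) n := by
    refine tsum_congr fun n => ?_
    rw [hAapp, QInftyTerm_shift]
  have hzero : A (QInftyTerm ν η ψ x 0)
      = (((x + 1 : ℝ) : ℂ) ^ (-2 * ν - 1)) •
        (η (Smat * Tmat⁻¹) : V →ₗ[ℂ] V) (ψ (x / (x + 1))) := by
    rw [hAapp, QInftyTerm_zero η ν ψ hx]
  have hL := hlewis x hx
  calc QInfty ν η ψ (x + 1)
      = ψ (x + 1) - ∑' n : ℕ, QInftyTerm ν η ψ (x + 1) n := rfl
    _ = (η Tmat : V →ₗ[ℂ] V) (ψ x) - A (∑' n : ℕ, QInftyTerm ν η ψ x n) := by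
        rw [htsumA, hsplit, hshift, hzero, hL]
        abel
    _ = (η Tmat : V →ₗ[ℂ] V) (QInfty ν η ψ x) := by
        rw [QInfty, map_sub, hAapp]


end
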